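/- Let U be a nonempty finite set, let τ and ν be probability mass functions on U with τ absolutely continuous with respect to ν (i.e. ν(u) = 0 implies τ(u) = 0), and let Δ > 0 be a real number. Define D(τ‖ν) = ∑_{u ∈ U, τ(u) > 0} τ(u) · log₂(τ(u)/ν(u)). Then ∑_{u ∈ U : τ(u) > 2^Δ · ν(u)} τ(u) ≤ (D(τ‖ν) + 1)/Δ. -/

import Mathlib

open Finset

lemma log_le_div_exp {x : ℝ} (hx : 0 < x) : Real.log x ≤ x / Real.exp 1 := by
  have h := Real.log_le_sub_one_of_pos (x := x / Real.exp 1)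
    (div_pos hx (Real.exp_pos 1))
  rw [Real.log_div hx.ne' (Real.exp_pos 1).ne', Real.log_exp] at h
  linarith

lemma pointwise_lb {t s : ℝ} (ht : 0 < t) (hs : 0 < s) :
    -(s / (Real.exp 1 * Real.log 2)) ≤ t * Real.logb 2 (t / s) := by
  have hlog2 : 0 < Real.log 2 := Real.log_pos one_lt_two
  have h1 : Real.log (s / t) ≤ (s / t) / Real.exp 1 := log_le_div_exp (div_pos hs ht)
  have h2 : t * Real.log (s / t) ≤ s / Real.exp 1 := by
    have := mul_le_mul_of_nonneg_left h1 ht.le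
    calc t * Real.log (s / t) ≤ t * ((s / t) / Real.exp 1) := this
      _ = s / Real.exp 1 := by field_simp
  have h3 : Real.log (t / s) = - Real.log (s / t) := by
    rw [← Real.log_inv]; congr 1; field_simp
  have goal_eq : t * Real.logb 2 (t / s) = -(t * Real.log (s / t)) / Real.log 2 := by
    rw [Real.logb, h3]; ring
  have lhs_eq : -(s / (Real.exp 1 * Real.log 2)) = -(s / Real.exp 1) / Real.log 2 := by
    rw [div_mul_eq_div_div, neg_div]
  rw [goal_eq, lhs_eq]
  gcongr

/-- For pmfs `τ, ν` on a nonempty finite set `U` with `τ` absolutely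
continuous w.r.t. `ν`, and `Δ > 0`, the `τ`-mass of the `Δ`-bad set
`{u : 2^Δ ν(u) < τ(u)}` is at most `(D(τ‖ν) + 1)/Δ`, where
`D(τ‖ν) = ∑_{u : τ(u) > 0} τ(u) log₂(τ(u)/ν(u))`. -/
theorem statement_0 {U : Type*} [Fintype U] [Nonempty U]
    (τ ν : U → ℝ)
    (hτ0 : ∀ u, 0 ≤ τ u) (hν0 : ∀ u, 0 ≤ ν u)
    (hτ1 : ∑ u, τ u = 1) (hν1 : ∑ u, ν u = 1)
    (hac : ∀ u, ν u = 0 → τ u = 0)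
    (Δ : ℝ) (hΔ : 0 < Δ) :
    ∑ u ∈ univ.filter (fun u => (2 : ℝ) ^ Δ * ν u < τ u), τ u ≤
      ((∑ u ∈ univ.filter (fun u => 0 < τ u), τ u * Real.logb 2 (τ u / ν u)) + 1) / Δ := by
  classical
  set B := univ.filter (fun u => (2 : ℝ) ^ Δ * ν u < τ u) with hBdef
  set P := univ.filter (fun u => 0 < τ u) with hPdef
  have hmemB : ∀ u ∈ B, 0 < τ u ∧ 0 < ν u ∧ Δ ≤ Real.logb 2 (τ u / ν u) := by
    intro u hu
    rw [hBdef, mem_filter] at hu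
    have hbad := hu.2
    have h2Δ : (0:ℝ) < (2:ℝ) ^ Δ := Real.rpow_pos_of_pos two_pos Δ
    have hτu : 0 < τ u :=
      lt_of_le_of_lt (mul_nonneg h2Δ.le (hν0 u)) hbad
    have hνu : 0 < ν u := by
      rcases (hν0 u).lt_or_eq with h | h
      · exact h
      · exact absurd (hac u h.symm) hτu.ne'
    refine ⟨hτu, hνu, ?_⟩
    have hr : (2:ℝ) ^ Δ < τ u / ν u := (lt_div_iff₀ hνu).2 (by linarith [mul_comm ((2:ℝ)^Δ) (ν u)])
    have hpos : 0 < τ u / ν u := h2Δ.trans hr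
    rw [Real.le_logb_iff_rpow_le one_lt_two hpos]
    exact hr.le
  have hBP : B ⊆ P := by
    intro u hu
    rw [hPdef, mem_filter]
    exact ⟨mem_univ u, (hmemB u hu).1⟩
  have hstep : Δ * ∑ u ∈ B, τ u ≤ ∑ u ∈ B, τ u * Real.logb 2 (τ u / ν u) := by
    rw [Finset.mul_sum]
    apply Finset.sum_le_sum
    intro u hu
    obtain ⟨hτu, _, hlb⟩ := hmemB u hu
    have := mul_le_mul_of_nonneg_left hlb hτu.le
    linarith
  have hsplit : ∑ u ∈ P \ B, τ u * Real.logb 2 (τ u / ν u)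
      + ∑ u ∈ B, τ u * Real.logb 2 (τ u / ν u)
      = ∑ u ∈ P, τ u * Real.logb 2 (τ u / ν u) := Finset.sum_sdiff hBP
  have hgood : (-1 : ℝ) ≤ ∑ u ∈ P \ B, τ u * Real.logb 2 (τ u / ν u) := by
    have hlog2 : 0 < Real.log 2 := Real.log_pos one_lt_two
    have hexp : (2.7182818283 : ℝ) < Real.exp 1 := Real.exp_one_gt_d9
    have hl2 : (0.6931471803 : ℝ) < Real.log 2 := Real.log_two_gt_d9
    have hel : 1 ≤ Real.exp 1 * Real.log 2 := by nlinarith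
    have h1 : ∀ u ∈ P \ B, -(ν u / (Real.exp 1 * Real.log 2))
        ≤ τ u * Real.logb 2 (τ u / ν u) := by
      intro u hu
      have huP := (Finset.mem_sdiff.1 hu).1
      rw [hPdef, mem_filter] at huP
      have hτu : 0 < τ u := huP.2
      have hνu : 0 < ν u := by
        rcases (hν0 u).lt_or_eq with h | h
        · exact h
        · exact absurd (hac u h.symm) hτu.ne'
      exact pointwise_lb hτu hνu
    have h2 : -(∑ u ∈ P \ B, ν u / (Real.exp 1 * Real.log 2))
        ≤ ∑ u ∈ P \ B, τ u * Real.logb 2 (τ u / ν u) := by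
      rw [← Finset.sum_neg_distrib]
      exact Finset.sum_le_sum h1
    have h3 : ∑ u ∈ P \ B, ν u / (Real.exp 1 * Real.log 2) ≤ 1 := by
      rw [← Finset.sum_div]
      have hsub : ∑ u ∈ P \ B, ν u ≤ 1 := by
        rw [← hν1]
        exact Finset.sum_le_sum_of_subset_of_nonneg (Finset.subset_univ _)
          (fun u _ _ => hν0 u)
      calc (∑ u ∈ P \ B, ν u) / (Real.exp 1 * Real.log 2)
          ≤ 1 / (Real.exp 1 * Real.log 2) :=
            by gcongr
        _ ≤ 1 := by rw [div_le_one (by nlinarith)]; exact hel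
    linarith
  have hmain : Δ * ∑ u ∈ B, τ u
      ≤ (∑ u ∈ P, τ u * Real.logb 2 (τ u / ν u)) + 1 := by linarith
  rw [le_div_iff₀ hΔ]
  linarith [hmain]
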